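/- There do not exist positive integers a, b, e with gcd(a,b)=1 such that (a²+b²)² + (2ab)² = e². -/

import Mathlib

private lemma zmod16 : ∀ k l z : ZMod 16, (2*l+1)^4 + z^2 ≠ (2*k)^4 := by decide

private lemma natAbs_lt_of_sq (m n x : ℤ) (h : m^2 + n^2 = x^2) (hn : n ≠ 0) :
    m.natAbs < x.natAbs := by
  have h1 : m^2 < x^2 := by nlinarith [pow_pos (abs_pos.mpr hn) 2, sq_abs n]
  have := Int.natAbs_lt_natAbs_of_nonneg_of_lt (sq_nonneg m) h1
  simpa [Int.natAbs_pow, Nat.pow_lt_pow_iff_left (by norm_num : 2 ≠ 0)] using this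

/-- No solutions to y^4 + z^2 = x^4 with y, z nonzero (Fermat descent). -/
private lemma no_diff_pow_four : ∀ x : ℕ, ∀ y z : ℤ, y ≠ 0 → z ≠ 0 →
    y ^ 4 + z ^ 2 ≠ (x : ℤ) ^ 4 := by
  intro x
  induction x using Nat.strong_induction_on with
  | _ x IH =>
  intro y z hy hz heq
  have hy4 : (0:ℤ) < y ^ 4 := by
    have := pow_pos (abs_pos.mpr hy) 4
    rwa [← abs_pow, abs_of_nonneg (by positivity : (0:ℤ) ≤ y ^ 4)] at this
  have hx0 : x ≠ 0 := by
    rintro rfl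
    simp only [Nat.cast_zero] at heq
    nlinarith [sq_nonneg z]
  have hxpos : (0:ℤ) < (x:ℤ) := by exact_mod_cast Nat.pos_of_ne_zero hx0
  -- reduce to the coprime case
  set g : ℕ := Nat.gcd x y.natAbs with hgdef
  by_cases hg1 : g = 1
  case neg =>
    have hg0 : g ≠ 0 := by
      intro h
      exact hx0 (Nat.eq_zero_of_gcd_eq_zero_left (hgdef ▸ h))
    have hg2 : 2 ≤ g := by omega
    obtain ⟨x', hx'⟩ : g ∣ x := Nat.gcd_dvd_left _ _
    have hgy : (g:ℤ) ∣ y := by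
      have : g ∣ y.natAbs := Nat.gcd_dvd_right _ _
      exact Int.dvd_natAbs.mp (Int.natCast_dvd_natCast.mpr this)
    obtain ⟨y', hy'⟩ := hgy
    have hgz : ((g:ℤ)^2) ∣ z := by
      rw [← Int.pow_dvd_pow_iff (two_ne_zero)]
      have : z ^ 2 = ((g:ℤ)^2)^2 * (x'^4 - y'^4) := by
        have hxc : (x:ℤ) = (g:ℤ) * (x':ℤ) := by exact_mod_cast congrArg (Nat.cast : ℕ → ℤ) hx'
        rw [hxc, hy'] at heq
        linear_combination heq
      exact ⟨_, this⟩
    obtain ⟨z', hz'⟩ := hgz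
    have hxc : (x:ℤ) = (g:ℤ) * (x':ℤ) := by exact_mod_cast congrArg (Nat.cast : ℕ → ℤ) hx'
    have hgne : ((g:ℤ)) ≠ 0 := by exact_mod_cast hg0
    have heq' : y' ^ 4 + z' ^ 2 = ((x':ℕ):ℤ) ^ 4 := by
      apply mul_left_cancel₀ (pow_ne_zero 4 hgne)
      rw [hy', hz', hxc] at heq
      linear_combination heq
    have hy'0 : y' ≠ 0 := by rintro rfl; simp at hy'; exact hy hy'
    have hz'0 : z' ≠ 0 := by rintro rfl; simp at hz'; exact hz hz'
    have hx'0 : x' ≠ 0 := by rintro rfl; simp at hx'; exact hx0 hx'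
    have hlt : x' < x := by
      calc x' < 2 * x' := by omega
      _ ≤ g * x' := Nat.mul_le_mul_right _ hg2
      _ = x := hx'.symm
    exact IH x' hlt y' z' hy'0 hz'0 heq'
  case pos =>
  have hco : Int.gcd (x:ℤ) y = 1 := by simpa [Int.gcd] using hg1
  have hxy : IsCoprime (x:ℤ) y := Int.isCoprime_iff_gcd_eq_one.mpr hco
  -- x must be odd
  rcases Nat.even_or_odd x with hxe | hxo
  · -- x even, so y odd: contradiction mod 16
    have hyodd : Odd y := by
      rcases Int.even_or_odd y with hye | hyo
      · exfalso
        obtain ⟨c, hc⟩ := hye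
        obtain ⟨d, hd⟩ := hxe
        have : ¬ IsCoprime (x:ℤ) y := by
          rw [Int.isCoprime_iff_gcd_eq_one]
          intro habs
          have h2x : (2:ℤ) ∣ (x:ℤ) := ⟨(d:ℤ), by exact_mod_cast (by omega : x = 2 * d)⟩
          have h2y : (2:ℤ) ∣ y := ⟨c, by omega⟩
          have := Int.dvd_gcd h2x h2y
          rw [habs] at this
          norm_num at this
        exact this hxy
      · exact hyo
    obtain ⟨l, hl⟩ := hyodd
    obtain ⟨d, hd⟩ := hxe
    have hxc : (x:ℤ) = 2 * (d:ℤ) := by exact_mod_cast (by omega : x = 2 * d)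
    rw [hl, hxc] at heq
    have h16 := congrArg (fun t : ℤ => (t : ZMod 16)) heq
    push_cast at h16
    exact zmod16 d l z h16
  · -- x odd
    have hyz : IsCoprime y z := by
      have h2 : IsCoprime (y^4) ((x:ℤ)^4) := (hxy.symm.pow : IsCoprime (y^4) ((x:ℤ)^4))
      have h1 : IsCoprime (y^4) (z^2) := by
        have h3 : z^2 = (x:ℤ)^4 + y^4 * (-1) := by linear_combination heq
        rw [h3]
        exact h2.add_mul_left_right (-1)
      have h4 : IsCoprime y (z^2) := (IsCoprime.pow_left_iff (by norm_num)).mp h1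
      exact (IsCoprime.pow_right_iff (by norm_num)).mp h4
    have hxo2 : ((x:ℤ)^2) % 2 = 1 := by
      have : Odd ((x:ℤ)^2) := by
        have : Odd ((x:ℤ)) := by exact_mod_cast hxo
        exact this.pow
      exact Int.odd_iff.mp this
    rcases Int.even_or_odd y with hye | hyo
    · -- Case B : y even, z odd
      have hzodd : Odd z := by
        rcases Int.even_or_odd z with hze | hzo
        · exfalso
          obtain ⟨c, hc⟩ := hze
          obtain ⟨c', hc'⟩ := hye
          have h2z : (2:ℤ) ∣ z := ⟨c, by omega⟩
          have h2y : (2:ℤ) ∣ y := ⟨c', by omega⟩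
          have hg' := Int.isCoprime_iff_gcd_eq_one.mp hyz
          have := Int.dvd_gcd h2y h2z
          rw [hg'] at this
          norm_num at this
        · exact hzo
      have ht : PythagoreanTriple z (y^2) ((x:ℤ)^2) := by
        delta PythagoreanTriple
        linear_combination heq
      have hgcd : Int.gcd z (y^2) = 1 :=
        Int.isCoprime_iff_gcd_eq_one.mp (hyz.symm.pow_right)
      have hx2pos : (0:ℤ) < (x:ℤ)^2 := by positivity
      obtain ⟨m, n, h1, h2, h3, h4, h5, h6⟩ :=
        ht.coprime_classification' hgcd (Int.odd_iff.mp hzodd) hx2pos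
      -- h1 : z = m^2-n^2, h2 : y^2 = 2mn, h3 : x^2 = m^2+n^2
      obtain ⟨w, hw⟩ := hye
      have hw2 : y = 2 * w := by omega
      have hmn : m * n = 2 * w ^ 2 := by
        rw [hw2] at h2
        have h2' : 2 * (m * n) = 2 * (2 * w ^ 2) := by linear_combination -h2
        exact mul_left_cancel₀ (by norm_num : (2:ℤ) ≠ 0) h2'
      have hm0 : m ≠ 0 := by
        rintro rfl
        simp at h2
        exact hy h2
      have hmpos : 0 < m := lt_of_le_of_ne h6 (Ne.symm hm0)
      have hn0 : n ≠ 0 := by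
        rintro rfl
        simp at h2
        exact hy h2
      have hw0 : w ≠ 0 := by
        rintro rfl
        rw [hw2] at hy
        simp at hy
      have hnpos : 0 < n := by
        rcases lt_or_gt_of_ne hn0 with h | h
        · exfalso
          have h1 : m * n < 0 := mul_neg_of_pos_of_neg hmpos h
          have h2 : 0 < w ^ 2 := sq_pos_of_ne_zero hw0
          rw [hmn] at h1
          linarith
        · exact h
      -- extract u, v with {m,n} = {2u^2, v^2}
      have key : ∃ u v : ℤ, u ≠ 0 ∧ v ≠ 0 ∧ v^2 % 2 = 1 ∧
          Int.gcd (v^2) (2*u^2) = 1 ∧ (x:ℤ)^2 = (v^2)^2 + (2*u^2)^2 := by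
        rcases h5 with ⟨hme, hno⟩ | ⟨hmo, hne⟩
        · -- m even, n odd
          obtain ⟨m', hm'⟩ : (2:ℤ) ∣ m := Int.dvd_of_emod_eq_zero hme
          have hm'n : m' * n = w ^ 2 := by
            rw [hm'] at hmn
            have : 2 * (m' * n) = 2 * w ^ 2 := by linear_combination hmn
            exact mul_left_cancel₀ (by norm_num : (2:ℤ) ≠ 0) (by linear_combination this)
          have hcop : Int.gcd m' n = 1 := by
            apply Int.isCoprime_iff_gcd_eq_one.mp
            have h' : IsCoprime ((2:ℤ) * m') n := by
              rw [← hm']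
              exact Int.isCoprime_iff_gcd_eq_one.mpr h4
            exact h'.of_mul_left_right
          obtain ⟨u, hu⟩ := Int.sq_of_gcd_eq_one hcop hm'n
          have hm'pos : 0 < m' := by omega
          have hm'u : m' = u ^ 2 := by
            rcases hu with h | h
            · exact h
            · exfalso; linarith [sq_nonneg u]
          obtain ⟨v, hv⟩ := Int.sq_of_gcd_eq_one
            (by rwa [Int.gcd_comm] at hcop) (by rw [mul_comm] at hm'n; exact hm'n)
          have hnv : n = v ^ 2 := by
            rcases hv with h | h
            · exact h
            · exfalso; linarith [sq_nonneg v]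
          refine ⟨u, v, ?_, ?_, ?_, ?_, ?_⟩
          · rintro rfl; simp at hm'u; omega
          · rintro rfl; simp at hnv; omega
          · rw [← hnv]; exact hno
          · rw [← hnv, (by rw [hm', hm'u] : (2:ℤ)*u^2 = m), Int.gcd_comm]
            exact h4
          · rw [h3, ← hnv, (by rw [hm', hm'u] : (2:ℤ)*u^2 = m)]
            try ring
        · -- m odd, n even
          obtain ⟨n', hn'⟩ : (2:ℤ) ∣ n := Int.dvd_of_emod_eq_zero hne
          have hn'm : n' * m = w ^ 2 := by
            rw [hn'] at hmn
            have : 2 * (n' * m) = 2 * w ^ 2 := by linear_combination hmn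
            exact mul_left_cancel₀ (by norm_num : (2:ℤ) ≠ 0) (by linear_combination this)
          have hcop : Int.gcd n' m = 1 := by
            apply Int.isCoprime_iff_gcd_eq_one.mp
            have h' : IsCoprime ((2:ℤ) * n') m := by
              rw [← hn']
              exact Int.isCoprime_iff_gcd_eq_one.mpr (by rwa [Int.gcd_comm] at h4)
            exact h'.of_mul_left_right
          obtain ⟨u, hu⟩ := Int.sq_of_gcd_eq_one hcop hn'm
          have hn'pos : 0 < n' := by omega
          have hn'u : n' = u ^ 2 := by
            rcases hu with h | h
            · exact h
            · exfalso; linarith [sq_nonneg u]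
          obtain ⟨v, hv⟩ := Int.sq_of_gcd_eq_one
            (by rwa [Int.gcd_comm] at hcop) (by rw [mul_comm] at hn'm; exact hn'm)
          have hmv : m = v ^ 2 := by
            rcases hv with h | h
            · exact h
            · exfalso; linarith [sq_nonneg v]
          refine ⟨u, v, ?_, ?_, ?_, ?_, ?_⟩
          · rintro rfl; simp at hn'u; omega
          · rintro rfl; simp at hmv; omega
          · rw [← hmv]; exact hmo
          · rw [← hmv, (by rw [hn', hn'u] : (2:ℤ)*u^2 = n)]
            exact h4
          · rw [h3, ← hmv, (by rw [hn', hn'u] : (2:ℤ)*u^2 = n)]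
            try ring
      obtain ⟨u, v, hu0, hv0, hv2odd, hguv, hx2⟩ := key
      have ht2 : PythagoreanTriple (v^2) (2*u^2) ((x:ℤ)) := by
        delta PythagoreanTriple
        linear_combination -hx2
      obtain ⟨m1, n1, k1, k2, k3, k4, k5, k6⟩ :=
        ht2.coprime_classification' hguv hv2odd hxpos
      -- k1 : v^2 = m1^2-n1^2, k2 : 2u^2 = 2*m1*n1, k3 : x = m1^2+n1^2
      have hu2 : m1 * n1 = u ^ 2 := by
        have h2' : 2 * (m1 * n1) = 2 * u ^ 2 := by linear_combination -k2
        exact mul_left_cancel₀ (by norm_num : (2:ℤ) ≠ 0) h2'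
      have hm10 : m1 ≠ 0 := by
        rintro rfl
        simp at hu2
        exact hu0 (pow_eq_zero_iff (by norm_num) |>.mp hu2.symm)
      have hm1pos : 0 < m1 := lt_of_le_of_ne k6 (Ne.symm hm10)
      have hn10 : n1 ≠ 0 := by
        rintro rfl
        simp at hu2
        exact hu0 (pow_eq_zero_iff (by norm_num) |>.mp hu2.symm)
      have hn1pos : 0 < n1 := by
        rcases lt_or_gt_of_ne hn10 with h | h
        · exfalso
          have h1 : m1 * n1 < 0 := mul_neg_of_pos_of_neg hm1pos h
          have h2 : 0 < u ^ 2 := sq_pos_of_ne_zero hu0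
          rw [hu2] at h1
          linarith
        · exact h
      obtain ⟨p, hp⟩ := Int.sq_of_gcd_eq_one k4 hu2
      have hm1p : m1 = p ^ 2 := by
        rcases hp with h | h
        · exact h
        · exfalso; linarith [sq_nonneg p]
      obtain ⟨q, hq⟩ := Int.sq_of_gcd_eq_one
        (by rwa [Int.gcd_comm] at k4) (by rw [mul_comm] at hu2; exact hu2)
      have hn1q : n1 = q ^ 2 := by
        rcases hq with h | h
        · exact h
        · exfalso; linarith [sq_nonneg q]
      have hq0 : q ≠ 0 := by rintro rfl; simp at hn1q; omega
      have hnew : q ^ 4 + v ^ 2 = p ^ 4 := by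
        rw [hm1p, hn1q] at k1
        linear_combination k1
      have hcast : ((p.natAbs ^ 4 : ℕ) : ℤ) = p ^ 4 := by
        rw [← Int.natAbs_pow]
        exact Int.natAbs_of_nonneg (by positivity)
      have hlt : p.natAbs < x := by
        have h1 : p ^ 4 < (x:ℤ) := by
          rw [k3, hm1p]
          have h0 : 0 < n1 ^ 2 := sq_pos_of_ne_zero hn10
          linarith
        have h2 : (p.natAbs ^ 4 : ℕ) < x := by
          have h3 : ((p.natAbs ^ 4 : ℕ) : ℤ) < ((x:ℕ) : ℤ) := by rw [hcast]; exact h1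
          exact_mod_cast h3
        calc p.natAbs ≤ p.natAbs ^ 4 := Nat.le_self_pow (by norm_num) _
          _ < x := h2
      exact IH p.natAbs hlt q v hq0 hv0 (by push_cast at hcast ⊢; rw [hcast]; exact hnew)
    · -- Case A : y odd
      have ht : PythagoreanTriple (y^2) z ((x:ℤ)^2) := by
        delta PythagoreanTriple
        linear_combination heq
      have hgcd : Int.gcd (y^2) z = 1 :=
        Int.isCoprime_iff_gcd_eq_one.mp (hyz.pow_left)
      have hy2odd : (y^2) % 2 = 1 := Int.odd_iff.mp (hyo.pow)
      have hx2pos : (0:ℤ) < (x:ℤ)^2 := by positivity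
      obtain ⟨m, n, h1, h2, h3, h4, h5, h6⟩ :=
        ht.coprime_classification' hgcd hy2odd hx2pos
      -- h1 : y^2 = m^2-n^2, h2 : z = 2mn, h3 : x^2 = m^2+n^2
      have hn0 : n ≠ 0 := by
        rintro rfl
        simp at h2
        exact hz h2
      have hnew : n ^ 4 + ((x:ℤ) * y) ^ 2 = m ^ 4 := by
        linear_combination ((x:ℤ))^2 * h1 + (m^2 - n^2) * h3
      have hxy0 : (x:ℤ) * y ≠ 0 := mul_ne_zero (by positivity) hy
      have hlt : m.natAbs < x := by
        have := natAbs_lt_of_sq m n ((x:ℤ)) (by linarith [h3]) hn0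
        simpa using this
      have hmabs : ((m.natAbs : ℕ) : ℤ) = m := Int.natAbs_of_nonneg h6
      exact IH m.natAbs hlt n ((x:ℤ)*y) hn0 hxy0 (by rw [hmabs]; exact hnew)

theorem stmt_1 :
    ¬ ∃ a b e : ℕ, 0 < a ∧ 0 < b ∧ 0 < e ∧ Nat.gcd a b = 1 ∧
      (a ^ 2 + b ^ 2) ^ 2 + (2 * a * b) ^ 2 = e ^ 2 := by
  rintro ⟨a, b, e, ha, hb, he, hg, heq⟩
  by_cases hab : a = b
  · subst hab
    rw [Nat.gcd_self] at hg
    subst hg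
    norm_num at heq
    -- heq : 8 = e^2
    have h1 : e < 3 := by nlinarith
    have h2 : 2 < e := by nlinarith
    omega
  · have heqZ : ((a:ℤ)^2 + (b:ℤ)^2)^2 + (2*(a:ℤ)*(b:ℤ))^2 = (e:ℤ)^2 := by
      exact_mod_cast heq
    have hid : (2*(a:ℤ)*b) ^ 4 + (((a:ℤ)^2 - (b:ℤ)^2) * e) ^ 2 = ((a^2+b^2 : ℕ) : ℤ) ^ 4 := by
      push_cast
      linear_combination (-((a:ℤ)^2 - (b:ℤ)^2)^2) * heqZ
    have hy0 : (2*(a:ℤ)*b) ≠ 0 := by positivity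
    have hz0 : (((a:ℤ)^2 - (b:ℤ)^2) * e) ≠ 0 := by
      apply mul_ne_zero
      · intro h
        have h' : (a:ℤ)^2 = (b:ℤ)^2 := by linarith
        have h'' : a ^ 2 = b ^ 2 := by exact_mod_cast h'
        exact hab (Nat.pow_left_injective (by norm_num) h'')
      · positivity
    exact no_diff_pow_four (a^2+b^2) _ _ hy0 hz0 hid
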